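/- Consider a two-level hierarchy with parent count N > 0 and children N₁,…,N_k ≥ 0 summing to N (k ≥ 1). Suppose (ε₁, ε₂) with ε₁, ε₂ > 0 minimizes f(ε₁, N) + Σᵢ f(ε₂, Nᵢ) subject to ε₁ + ε₂ = ε_total, where f(ε, M) = (1/ε²)(2 − e^{−εM}) − (M/ε)e^{−εM}. Then ε₁ ≤ ε₂. -/

import Mathlib

open Real Finset

/-- MSE of the non-negativity post-processed Laplace mechanism with count `M`
and privacy budget `ε`. -/
noncomputable def fMSE (ε M : ℝ) : ℝ :=
  1 / ε ^ 2 * (2 - Real.exp (-ε * M)) - M / ε * Real.exp (-ε * M)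

lemma exp_poly2 (x : ℝ) (hx : 0 ≤ x) : x^2 + 2*x + 2 ≤ 2 * Real.exp x := by
  have h := Real.sum_le_exp_of_nonneg hx 3
  simp [Finset.sum_range_succ] at h
  nlinarith [h]

lemma exp_poly3 (x : ℝ) (hx : 0 ≤ x) : x^3 + 3*x^2 + 6*x + 6 ≤ 6 * Real.exp x := by
  have h := Real.sum_le_exp_of_nonneg hx 4
  simp [Finset.sum_range_succ, Nat.factorial] at h
  nlinarith [h]

lemma hasDerivAt_core (M ε : ℝ) :
    HasDerivAt (fun e => Real.exp (-e*M) * (1 + e*M)) (-(ε*M^2) * Real.exp (-ε*M)) ε := by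
  have h1 : HasDerivAt (fun e : ℝ => -e*M) (-M) ε := by
    simpa using ((hasDerivAt_id ε).neg.mul_const M)
  have h2 := h1.exp
  have h3 : HasDerivAt (fun e : ℝ => 1 + e*M) M ε := by
    simpa using ((hasDerivAt_id ε).mul_const M).const_add 1
  have h4 := h2.mul h3
  refine h4.congr_deriv ?_
  ring

/-- auxiliary function: `fMSE ε M = 2/ε² - uF M ε`. -/
noncomputable def uF (M e : ℝ) : ℝ := Real.exp (-e*M) * (1 + e*M) / e^2

/-- auxiliary function: `fMSE ε M = 1/ε² + wF M ε`. -/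
noncomputable def wF (M e : ℝ) : ℝ := (1 - Real.exp (-e*M) * (1 + e*M)) / e^2

/-- first derivative of `fMSE · M`. -/
noncomputable def Gd (M e : ℝ) : ℝ :=
  (Real.exp (-e*M) * (e^2*M^2 + 2*e*M + 2) - 4) / e^3

lemma fMSE_eq_u (M e : ℝ) (he : e ≠ 0) : fMSE e M = 2/e^2 - uF M e := by
  unfold fMSE uF; field_simp; ring

lemma fMSE_eq_w (M e : ℝ) (he : e ≠ 0) : fMSE e M = 1/e^2 + wF M e := by
  unfold fMSE wF; field_simp; ring

lemma hasDerivAt_uF (M ε : ℝ) (hε : ε ≠ 0) :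
    HasDerivAt (uF M)
      (-(Real.exp (-ε*M) * (ε^2*M^2 + 2*ε*M + 2)) / ε^3) ε := by
  have h := (hasDerivAt_core M ε).div (hasDerivAt_pow 2 ε) (pow_ne_zero 2 hε)
  refine h.congr_deriv ?_
  field_simp
  ring

lemma hasDerivAt_wF (M ε : ℝ) (hε : ε ≠ 0) :
    HasDerivAt (wF M)
      ((Real.exp (-ε*M) * (ε^2*M^2 + 2*ε*M + 2) - 2) / ε^3) ε := by
  have h := ((hasDerivAt_core M ε).const_sub 1).div (hasDerivAt_pow 2 ε) (pow_ne_zero 2 hε)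
  refine h.congr_deriv ?_
  field_simp
  ring

lemma hasDerivAt_fMSE (M ε : ℝ) (hε : 0 < ε) :
    HasDerivAt (fun e => fMSE e M) (Gd M ε) ε := by
  have h := ((hasDerivAt_core M ε).const_sub 2).div (hasDerivAt_pow 2 ε)
    (pow_ne_zero 2 hε.ne')
  have heq : (fun e => fMSE e M) =ᶠ[nhds ε] (fun e => (2 - Real.exp (-e*M) * (1 + e*M)) / e^2) := by
    filter_upwards [eventually_ne_nhds hε.ne'] with x hx
    unfold fMSE; field_simp; ring
  have h2 : HasDerivAt (fun e => fMSE e M)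
      ((-(-(ε * M ^ 2) * Real.exp (-ε * M)) * ε ^ 2 -
        (2 - Real.exp (-ε * M) * (1 + ε * M)) * (↑2 * ε ^ (2 - 1))) / (ε ^ 2) ^ 2) ε :=
    h.congr_of_eventuallyEq heq
  convert h2 using 1
  have : ε ≠ 0 := hε.ne'
  unfold Gd
  field_simp
  ring

lemma hasDerivAt_Gd (M ε : ℝ) (hε : ε ≠ 0) :
    HasDerivAt (Gd M)
      ((12 - Real.exp (-ε*M) * ((ε*M)^3 + 3*(ε*M)^2 + 6*(ε*M) + 6)) / ε^4) ε := by
  have h1 : HasDerivAt (fun e : ℝ => -e*M) (-M) ε := by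
    simpa using ((hasDerivAt_id ε).neg.mul_const M)
  have h2 := h1.exp
  have h3 : HasDerivAt (fun e : ℝ => e^2*M^2 + 2*e*M + 2) (2*ε*M^2 + 2*M) ε := by
    have := (((hasDerivAt_pow 2 ε).mul_const (M^2)).add
      (((hasDerivAt_id ε).const_mul 2).mul_const M)).add_const 2
    refine this.congr_deriv ?_
    push_cast
    ring
  have h4 := (h2.fun_mul h3).sub_const 4
  have h5 := h4.div (hasDerivAt_pow 3 ε) (pow_ne_zero 3 hε)
  refine h5.congr_deriv ?_
  field_simp
  ring

lemma uF_anti (M : ℝ) (hM : 0 ≤ M) : AntitoneOn (uF M) (Set.Ioi 0) := by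
  apply antitoneOn_of_deriv_nonpos (convex_Ioi 0)
  · intro x hx
    exact (hasDerivAt_uF M x (ne_of_gt hx)).continuousAt.continuousWithinAt
  · rw [interior_Ioi]
    intro x hx
    exact (hasDerivAt_uF M x (ne_of_gt hx)).differentiableAt.differentiableWithinAt
  · rw [interior_Ioi]
    intro x hx
    rw [(hasDerivAt_uF M x (ne_of_gt hx)).deriv]
    have hx' : (0:ℝ) < x := hx
    have hE := Real.exp_pos (-x*M)
    have hq : 0 ≤ x^2*M^2 + 2*x*M + 2 := by nlinarith [mul_nonneg hx'.le hM, sq_nonneg (x*M)]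
    have hx3 : (0:ℝ) < x^3 := by positivity
    apply div_nonpos_of_nonpos_of_nonneg _ hx3.le
    nlinarith

lemma wF_anti (M : ℝ) (hM : 0 ≤ M) : AntitoneOn (wF M) (Set.Ioi 0) := by
  apply antitoneOn_of_deriv_nonpos (convex_Ioi 0)
  · intro x hx
    exact (hasDerivAt_wF M x (ne_of_gt hx)).continuousAt.continuousWithinAt
  · rw [interior_Ioi]
    intro x hx
    exact (hasDerivAt_wF M x (ne_of_gt hx)).differentiableAt.differentiableWithinAt
  · rw [interior_Ioi]
    intro x hx
    rw [(hasDerivAt_wF M x (ne_of_gt hx)).deriv]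
    have hx' : (0:ℝ) < x := hx
    have ht : 0 ≤ x*M := mul_nonneg hx'.le hM
    have h2 := exp_poly2 (x*M) ht
    have hinv : Real.exp (-(x*M)) * Real.exp (x*M) = 1 := by
      rw [← Real.exp_add]; simp
    have hEe : Real.exp (-x*M) = Real.exp (-(x*M)) := by rw [neg_mul]
    have hx3 : (0:ℝ) < x^3 := by positivity
    apply div_nonpos_of_nonpos_of_nonneg _ hx3.le
    rw [hEe]
    nlinarith [Real.exp_pos (-(x*M))]

lemma fMSE_strictConvex (M : ℝ) (hM : 0 ≤ M) :
    StrictConvexOn ℝ (Set.Ioi (0:ℝ)) (fun e => fMSE e M) := by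
  apply strictConvexOn_of_deriv2_pos (convex_Ioi 0)
  · intro x hx
    exact (hasDerivAt_fMSE M x hx).continuousAt.continuousWithinAt
  · rw [interior_Ioi]
    intro x hx
    have hd : deriv (fun e => fMSE e M) =ᶠ[nhds x] Gd M := by
      filter_upwards [Ioi_mem_nhds hx] with y hy
      exact (hasDerivAt_fMSE M y hy).deriv
    have h2 : deriv^[2] (fun e => fMSE e M) x = deriv (deriv (fun e => fMSE e M)) x := rfl
    rw [h2, hd.deriv_eq, (hasDerivAt_Gd M x (ne_of_gt hx)).deriv]
    have hx' : (0:ℝ) < x := hx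
    have ht : 0 ≤ x*M := mul_nonneg hx'.le hM
    have h3 := exp_poly3 (x*M) ht
    have hinv : Real.exp (-(x*M)) * Real.exp (x*M) = 1 := by
      rw [← Real.exp_add]; simp
    have hEe : Real.exp (-x*M) = Real.exp (-(x*M)) := by rw [neg_mul]
    have hx4 : (0:ℝ) < x^4 := by positivity
    apply div_pos _ hx4
    rw [hEe]
    nlinarith [Real.exp_pos (-(x*M))]

lemma diff_upper (M a b : ℝ) (hM : 0 ≤ M) (hb : 0 < b) (hba : b ≤ a) :
    fMSE a M - fMSE b M ≤ 1/a^2 - 1/b^2 := by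
  have ha : 0 < a := lt_of_lt_of_le hb hba
  rw [fMSE_eq_w M a ha.ne', fMSE_eq_w M b hb.ne']
  have := wF_anti M hM (Set.mem_Ioi.2 hb) (Set.mem_Ioi.2 ha) hba
  linarith

lemma diff_lower (M a b : ℝ) (hM : 0 ≤ M) (hb : 0 < b) (hba : b ≤ a) :
    2*(1/a^2 - 1/b^2) ≤ fMSE a M - fMSE b M := by
  have ha : 0 < a := lt_of_lt_of_le hb hba
  rw [fMSE_eq_u M a ha.ne', fMSE_eq_u M b hb.ne']
  have := uF_anti M hM (Set.mem_Ioi.2 hb) (Set.mem_Ioi.2 ha) hba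
  have e1 : 2/a^2 = 2*(1/a^2) := by ring
  have e2 : 2/b^2 = 2*(1/b^2) := by ring
  linarith

theorem optimal_allocation_bottom_heavy (N : ℝ) (hN : 0 < N) (k : ℕ) (hk : 1 ≤ k)
    (Ni : Fin k → ℝ) (hNi : ∀ i, 0 ≤ Ni i) (hsum : ∑ i, Ni i = N)
    (εTotal ε₁ ε₂ : ℝ) (hε₁ : 0 < ε₁) (hε₂ : 0 < ε₂) (hbudget : ε₁ + ε₂ = εTotal)
    (hopt : ∀ ε₁' ε₂' : ℝ, 0 < ε₁' → 0 < ε₂' → ε₁' + ε₂' = εTotal →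
      fMSE ε₁ N + ∑ i, fMSE ε₂ (Ni i) ≤ fMSE ε₁' N + ∑ i, fMSE ε₂' (Ni i)) :
    ε₁ ≤ ε₂ := by
  by_contra hcon
  push_neg at hcon
  have hA : 1/ε₁^2 - 1/ε₂^2 < 0 := by
    have hsq : ε₂^2 < ε₁^2 := by nlinarith
    have h1 : 1/ε₁^2 < 1/ε₂^2 := one_div_lt_one_div_of_lt (by positivity) hsq
    linarith
  have key : ∑ i, fMSE ε₁ (Ni i) - ∑ i, fMSE ε₂ (Ni i) ≤ fMSE ε₁ N - fMSE ε₂ N := by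
    rcases eq_or_lt_of_le hk with hk1 | hk2
    · obtain rfl : k = 1 := hk1.symm
      rw [Fin.sum_univ_one] at hsum ⊢
      rw [Fin.sum_univ_one, hsum]
    · have hsum_le : ∑ i, (fMSE ε₁ (Ni i) - fMSE ε₂ (Ni i)) ≤
          ∑ _i : Fin k, (1/ε₁^2 - 1/ε₂^2) :=
        Finset.sum_le_sum (fun i _ => diff_upper (Ni i) ε₁ ε₂ (hNi i) hε₂ hcon.le)
      rw [Finset.sum_const, Finset.card_univ, Fintype.card_fin, nsmul_eq_mul,
        Finset.sum_sub_distrib] at hsum_le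
      have hk2' : (2:ℝ) ≤ (k:ℝ) := by exact_mod_cast hk2
      have hlow := diff_lower N ε₁ ε₂ hN.le hε₂ hcon.le
      nlinarith
  have hεT : 0 < εTotal/2 := by linarith
  have hopt' := hopt (εTotal/2) (εTotal/2) hεT hεT (by ring)
  have hne : ε₁ ≠ ε₂ := ne_of_gt hcon
  have hmid : ∀ M : ℝ, 0 ≤ M →
      fMSE (εTotal/2) M < 1/2 * fMSE ε₁ M + 1/2 * fMSE ε₂ M := by
    intro M hM
    have sc := fMSE_strictConvex M hM
    have h := sc.2 (Set.mem_Ioi.2 hε₁) (Set.mem_Ioi.2 hε₂) hne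
      (by norm_num : (0:ℝ) < 1/2) (by norm_num : (0:ℝ) < 1/2) (by norm_num)
    have hmeq : (1:ℝ)/2 * ε₁ + 1/2 * ε₂ = εTotal/2 := by rw [← hbudget]; ring
    simp only [smul_eq_mul] at h
    rw [hmeq] at h
    exact h
  have h1 := hmid N hN.le
  have h2 : ∑ i, fMSE (εTotal/2) (Ni i) <
      ∑ i, (1/2 * fMSE ε₁ (Ni i) + 1/2 * fMSE ε₂ (Ni i)) := by
    apply Finset.sum_lt_sum_of_nonempty
    · exact ⟨⟨0, hk⟩, Finset.mem_univ _⟩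
    · intro i _; exact hmid (Ni i) (hNi i)
  rw [Finset.sum_add_distrib, ← Finset.mul_sum, ← Finset.mul_sum] at h2
  linarith
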